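/- For η > -1 and p ∈ [-1,1] with p ≠ 0, the smallest positive zero τ₀(p) of q₀(τ) = cos(τ)cos(τηp) − p·sin(τ)sin(τηp) is strictly less than the smallest positive zero τ₃(p) of q₃(τ) = cos(τ)sin(τηp) + p·sin(τ)cos(τηp). -/

import Mathlib

open Real
noncomputable def q0 (η p τ : ℝ) : ℝ := Real.cos τ * Real.cos (τ*η*p) - p * Real.sin τ * Real.sin (τ*η*p)
noncomputable def q3 (η p τ : ℝ) : ℝ := Real.cos τ * Real.sin (τ*η*p) + p * Real.sin τ * Real.cos (τ*η*p)

lemma aux_hd (η p τ : ℝ) : HasDerivAt (fun x : ℝ => x*η*p) (η*p) τ := by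
  simpa using ((hasDerivAt_id τ).mul_const η).mul_const p

lemma q0_hd (η p τ : ℝ) :
    HasDerivAt (q0 η p)
      (-((1+η*p^2) * Real.sin τ * Real.cos (τ*η*p) + p*(1+η) * Real.cos τ * Real.sin (τ*η*p))) τ := by
  have h := ((Real.hasDerivAt_cos τ).mul (aux_hd η p τ).cos).sub
    ((((Real.hasDerivAt_sin τ).const_mul p)).mul (aux_hd η p τ).sin)
  have h2 : HasDerivAt (fun x : ℝ => Real.cos x * Real.cos (x*η*p) - p * Real.sin x * Real.sin (x*η*p))
      (-((1+η*p^2) * Real.sin τ * Real.cos (τ*η*p) + p*(1+η) * Real.cos τ * Real.sin (τ*η*p))) τ := by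
    exact h.congr_deriv (by ring)
  exact h2

lemma q3_hd (η p τ : ℝ) :
    HasDerivAt (q3 η p)
      (p*(1+η) * Real.cos τ * Real.cos (τ*η*p) - (1+η*p^2) * Real.sin τ * Real.sin (τ*η*p)) τ := by
  have h := ((Real.hasDerivAt_cos τ).mul (aux_hd η p τ).sin).add
    ((((Real.hasDerivAt_sin τ).const_mul p)).mul (aux_hd η p τ).cos)
  have h2 : HasDerivAt (fun x : ℝ => Real.cos x * Real.sin (x*η*p) + p * Real.sin x * Real.cos (x*η*p))
      (p*(1+η) * Real.cos τ * Real.cos (τ*η*p) - (1+η*p^2) * Real.sin τ * Real.sin (τ*η*p)) τ := by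
    exact h.congr_deriv (by ring)
  exact h2

lemma cont_q0 (η p : ℝ) : Continuous (q0 η p) := by
  unfold q0; fun_prop

lemma cont_q3 (η p : ℝ) : Continuous (q3 η p) := by
  unfold q3; fun_prop

lemma wronskian (η p τ : ℝ) :
    q0 η p τ * (p*(1+η) * Real.cos τ * Real.cos (τ*η*p) - (1+η*p^2) * Real.sin τ * Real.sin (τ*η*p))
    - q3 η p τ * (-((1+η*p^2) * Real.sin τ * Real.cos (τ*η*p) + p*(1+η) * Real.cos τ * Real.sin (τ*η*p)))
    = p*((1+η) * Real.cos τ ^2 + (1+η*p^2) * Real.sin τ ^2) := by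
  simp only [q0, q3]
  linear_combination (p*(1+η)*Real.cos τ^2 + p*(1+η*p^2)*Real.sin τ^2) *
    (Real.sin_sq_add_cos_sq (τ*η*p))

lemma sq_sum (η p τ : ℝ) :
    q0 η p τ ^2 + q3 η p τ ^2 = Real.cos τ ^2 + p^2 * Real.sin τ ^2 := by
  simp only [q0, q3]
  linear_combination (Real.cos τ^2 + p^2 * Real.sin τ^2) * (Real.sin_sq_add_cos_sq (τ*η*p))

theorem stmt6 (η p τ₀ τ₃ : ℝ) (hη : η > -1) (hp : p ∈ Set.Icc (-1:ℝ) 1) (hp0 : p ≠ 0)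
    (h0 : IsLeast {τ : ℝ | 0 < τ ∧ q0 η p τ = 0} τ₀)
    (h3 : IsLeast {τ : ℝ | 0 < τ ∧ q3 η p τ = 0} τ₃) :
    τ₀ < τ₃ := by
  obtain ⟨⟨hτ0pos, hq0z⟩, hlb0⟩ := h0
  obtain ⟨⟨hτ3pos, hq3z⟩, hlb3⟩ := h3
  by_contra hcon
  push_neg at hcon
  -- basic facts about p
  have hp2le : p^2 ≤ 1 := by nlinarith [hp.1, hp.2]
  have hp2pos : 0 < p^2 := by positivity
  have hA : 0 < 1 + η*p^2 := by nlinarith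
  -- q0 is positive on [0, τ₀)
  have hq0pos : ∀ t, 0 ≤ t → t < τ₀ → 0 < q0 η p t := by
    intro t ht0 htlt
    by_contra hle
    push_neg at hle
    have h1 : q0 η p 0 = 1 := by simp [q0]
    have htne : t ≠ 0 := by
      intro h; rw [h, h1] at hle; linarith
    have htpos : 0 < t := lt_of_le_of_ne ht0 (Ne.symm htne)
    rcases eq_or_lt_of_le hle with heq | hlt2
    · exact absurd (hlb0 ⟨htpos, heq⟩) (not_le.mpr htlt)
    · have hsub : (0:ℝ) ∈ Set.Ioo (q0 η p t) (q0 η p 0) := by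
        rw [h1]; exact ⟨hlt2, one_pos⟩
      obtain ⟨c, hc, hcz⟩ := intermediate_value_Ioo' (le_of_lt htpos)
        (cont_q0 η p).continuousOn hsub
      exact absurd (hlb0 ⟨hc.1, hcz⟩) (not_le.mpr (lt_trans hc.2 htlt))
  rcases eq_or_lt_of_le hcon with heq | hlt
  · -- τ₃ = τ₀ : both vanish, contradicting q0² + q3² > 0
    have hz0 : q0 η p τ₃ = 0 := by rw [heq]; exact hq0z
    have hs := sq_sum η p τ₃
    nlinarith [Real.sin_sq_add_cos_sq τ₃, sq_nonneg (Real.sin τ₃), sq_nonneg (Real.cos τ₃)]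
  · -- τ₃ < τ₀ : g = p·q3/q0 is strictly increasing on [0,τ₃] but g 0 = g τ₃ = 0
    set g : ℝ → ℝ := fun t => p * q3 η p t / q0 η p t with hg
    have hq0pos' : ∀ t ∈ Set.Icc (0:ℝ) τ₃, 0 < q0 η p t := by
      intro t ht
      exact hq0pos t ht.1 (lt_of_le_of_lt ht.2 hlt)
    have hmono : StrictMonoOn g (Set.Icc 0 τ₃) := by
      apply strictMonoOn_of_deriv_pos (convex_Icc 0 τ₃)
      · exact ContinuousOn.div (continuous_const.mul (cont_q3 η p)).continuousOn
          (cont_q0 η p).continuousOn (fun t ht => (hq0pos' t ht).ne')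
      · intro x hx
        rw [interior_Icc] at hx
        have hxI : x ∈ Set.Icc (0:ℝ) τ₃ := ⟨le_of_lt hx.1, le_of_lt hx.2⟩
        have hne : q0 η p x ≠ 0 := (hq0pos' x hxI).ne'
        have hd := (((q3_hd η p x).const_mul p)).div (q0_hd η p x) hne
        rw [show g = (fun y => p * q3 η p y) / q0 η p from rfl, hd.deriv]
        have key := wronskian η p x
        have hW : 0 < (1+η) * Real.cos x ^2 + (1+η*p^2) * Real.sin x ^2 := by
          nlinarith [Real.sin_sq_add_cos_sq x,
            mul_nonneg (mul_nonneg (show (0:ℝ) ≤ 1+η by linarith)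
              (show (0:ℝ) ≤ 1-p^2 by linarith)) (sq_nonneg (Real.cos x)),
            mul_nonneg (show (0:ℝ) ≤ 1-p^2 by linarith) (sq_nonneg (Real.sin x)),
            mul_pos (show (0:ℝ) < 1+η by linarith) hp2pos]
        have hnum : p * (p*(1+η) * Real.cos x * Real.cos (x*η*p)
              - (1+η*p^2) * Real.sin x * Real.sin (x*η*p)) * q0 η p x
            - p * q3 η p x * (-((1+η*p^2) * Real.sin x * Real.cos (x*η*p)
              + p*(1+η) * Real.cos x * Real.sin (x*η*p)))
            = p^2 * ((1+η) * Real.cos x ^2 + (1+η*p^2) * Real.sin x ^2) := by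
          linear_combination p * key
        rw [hnum]
        exact div_pos (mul_pos hp2pos hW) (pow_pos (hq0pos' x hxI) 2)
    have hg0 : g 0 = 0 := by simp [hg, q3]
    have hg3 : g τ₃ = 0 := by simp [hg, hq3z]
    have := hmono (Set.left_mem_Icc.mpr (le_of_lt hτ3pos))
      (Set.right_mem_Icc.mpr (le_of_lt hτ3pos)) hτ3pos
    rw [hg0, hg3] at this
    exact lt_irrefl 0 this
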